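/- There exists ε > 0 such that for all f ∈ (0, ε): E(Dcur^(M)(f,·)) = Σ_{n=1}^N (Σ_{ℓ=0}^M Λ_n^{(ℓ,M,N)})·log(1 + f·t_n/t̂), where Λ_n^{(M,M,N)} := 0 and, for ℓ ∈ {0,1,…,M−1}, Λ_n^{(ℓ,M,N)} := Σ P({ω})·#{i ≥ ℓ+1 : ω_i = n} ≥ 0, the sum running over all ω ∈ Ω^(M) satisfying Σ_{j=k}^ℓ t_{ω_j} > 0 for every k = 1,…,ℓ and Σ_{j=ℓ+1}^{k̃} t_{ω_j} ≤ 0 for every k̃ = ℓ+1,…,M. -/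

import Mathlib

open scoped Classical

open Finset

lemma auxLog (x : ℝ) (hx : -(1/2) ≤ x) : x - 2*x^2 ≤ Real.log (1+x) := by
  have h1 : (0:ℝ) < 1 + x := by linarith
  have h2 : Real.log (1+x)⁻¹ ≤ (1+x)⁻¹ - 1 := Real.log_le_sub_one_of_pos (by positivity)
  rw [Real.log_inv] at h2
  have h3 : 1 - (1+x)⁻¹ ≤ Real.log (1+x) := by linarith
  have h4 : (1+x)⁻¹ * (1+x) = 1 := inv_mul_cancel₀ (ne_of_gt h1)
  nlinarith [sq_nonneg x, sq_nonneg (x*(1+x))]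

lemma auxProdLeOne {ι : Type*} (s : Finset ι) (c : ι → ℝ) (f : ℝ) (hf : 0 ≤ f)
    (hsum : ∑ j ∈ s, c j ≤ 0) (hpos : ∀ j ∈ s, 0 ≤ 1 + f * c j) :
    ∏ j ∈ s, (1 + f * c j) ≤ 1 := by
  calc ∏ j ∈ s, (1 + f * c j) ≤ ∏ j ∈ s, Real.exp (f * c j) :=
        Finset.prod_le_prod hpos (fun j _ => by
          have := Real.add_one_le_exp (f * c j); linarith)
    _ = Real.exp (∑ j ∈ s, f * c j) := (Real.exp_sum s _).symm
    _ ≤ 1 := by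
        rw [← Real.exp_zero]
        apply Real.exp_le_exp.mpr
        rw [← Finset.mul_sum]
        exact mul_nonpos_of_nonneg_of_nonpos hf hsum

lemma auxProdGeOne {ι : Type*} (s : Finset ι) (c : ι → ℝ) (hsum : 0 < ∑ j ∈ s, c j) :
    ∃ ε > 0, ∀ f : ℝ, 0 < f → f < ε → 1 ≤ ∏ j ∈ s, (1 + f * c j) := by
  set σ := ∑ j ∈ s, c j with hσ
  set B := ∑ j ∈ s, (c j)^2 with hB
  set D := ∑ j ∈ s, |c j| with hD
  have hB0 : 0 ≤ B := Finset.sum_nonneg fun j _ => sq_nonneg _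
  have hD0 : 0 ≤ D := Finset.sum_nonneg fun j _ => abs_nonneg _
  refine ⟨min (σ / (2*B+1)) (1/(2*D+2)), lt_min (by positivity) (by positivity), ?_⟩
  intro f hf0 hfε
  have hf1 : f < σ / (2*B+1) := lt_of_lt_of_le hfε (min_le_left _ _)
  have hf2 : f < 1/(2*D+2) := lt_of_lt_of_le hfε (min_le_right _ _)
  have hcD : ∀ j ∈ s, |c j| ≤ D := fun j hj =>
    Finset.single_le_sum (fun i _ => abs_nonneg (c i)) hj
  have hhalf : ∀ j ∈ s, -(1/2) ≤ f * c j := by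
    intro j hj
    have h1 : |f * c j| ≤ f * D := by
      rw [abs_mul, abs_of_pos hf0]
      exact mul_le_mul_of_nonneg_left (hcD j hj) hf0.le
    have h2 : f * D < 1/2 := by
      have := mul_lt_mul_of_pos_right hf2 (by linarith : (0:ℝ) < 2*D+2)
      rw [div_mul_cancel₀] at this
      · nlinarith
      · positivity
    have := abs_le.mp (le_of_lt (lt_of_le_of_lt h1 h2))
    linarith [this.1]
  have hposf : ∀ j ∈ s, 0 < 1 + f * c j := fun j hj => by linarith [hhalf j hj]
  have key : 0 ≤ ∑ j ∈ s, Real.log (1 + f * c j) := by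
    have hle : ∀ j ∈ s, f * c j - 2*(f * c j)^2 ≤ Real.log (1 + f * c j) :=
      fun j hj => auxLog _ (hhalf j hj)
    have h1 : ∑ j ∈ s, (f * c j - 2*(f * c j)^2) ≤ ∑ j ∈ s, Real.log (1 + f * c j) :=
      Finset.sum_le_sum hle
    have h2 : ∑ j ∈ s, (f * c j - 2*(f * c j)^2) = f * σ - 2 * f^2 * B := by
      rw [Finset.sum_sub_distrib, ← Finset.mul_sum, ← hσ, hB, Finset.mul_sum]
      congr 1
      rw [Finset.mul_sum]
      exact Finset.sum_congr rfl fun j _ => by ring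
    have h3 : 0 ≤ f * σ - 2 * f^2 * B := by
      have : f * (2*B+1) < σ := by
        have := mul_lt_mul_of_pos_right hf1 (by positivity : (0:ℝ) < 2*B+1)
        rwa [div_mul_cancel₀ _ (by positivity : (2*B+1:ℝ) ≠ 0)] at this
      nlinarith
    linarith
  calc (1:ℝ) = Real.exp 0 := Real.exp_zero.symm
    _ ≤ Real.exp (∑ j ∈ s, Real.log (1 + f * c j)) := Real.exp_le_exp.mpr key
    _ = ∏ j ∈ s, Real.exp (Real.log (1 + f * c j)) := Real.exp_sum s _
    _ = ∏ j ∈ s, (1 + f * c j) := Finset.prod_congr rfl fun j hj =>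
        Real.exp_log (hposf j hj)

noncomputable section

def auxS (M : ℕ) {N : ℕ} (t : Fin N → ℝ) (ω : Fin M → Fin N) (k : ℕ) : ℝ :=
  ∑ j ∈ Finset.univ.filter (fun j : Fin M => j.1 < k), t (ω j)

lemma auxS_interval {M N : ℕ} (t : Fin N → ℝ) (ω : Fin M → Fin N) {a b : ℕ} (hab : a ≤ b) :
    ∑ j ∈ Finset.univ.filter (fun j : Fin M => a ≤ j.1 ∧ j.1 < b), t (ω j)
      = auxS M t ω b - auxS M t ω a := by
  have h := Finset.sum_filter_add_sum_filter_not
    (Finset.univ.filter (fun j : Fin M => j.1 < b)) (fun j : Fin M => j.1 < a)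
    (fun j => t (ω j))
  rw [Finset.filter_filter, Finset.filter_filter] at h
  have e1 : Finset.univ.filter (fun j : Fin M => j.1 < b ∧ j.1 < a)
      = Finset.univ.filter (fun j : Fin M => j.1 < a) :=
    Finset.filter_congr (fun j _ => by omega)
  have e2 : Finset.univ.filter (fun j : Fin M => j.1 < b ∧ ¬ j.1 < a)
      = Finset.univ.filter (fun j : Fin M => a ≤ j.1 ∧ j.1 < b) :=
    Finset.filter_congr (fun j _ => by omega)
  rw [e1, e2] at h
  unfold auxS
  linarith

/-- the set of argmax indices of the prefix sums -/
def auxG (M : ℕ) {N : ℕ} (t : Fin N → ℝ) (ω : Fin M → Fin N) : Finset ℕ :=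
  @Finset.filter _
    (fun ℓ => ∀ k ∈ Finset.range (M+1), auxS M t ω k ≤ auxS M t ω ℓ)
    (fun _ => Classical.propDecidable _) (Finset.range (M+1))

lemma mem_auxG {M N : ℕ} {t : Fin N → ℝ} {ω : Fin M → Fin N} {x : ℕ} :
    x ∈ auxG M t ω ↔ x ∈ Finset.range (M+1) ∧
      ∀ k ∈ Finset.range (M+1), auxS M t ω k ≤ auxS M t ω x := by
  rw [auxG]
  exact @Finset.mem_filter _ _ (fun _ => Classical.propDecidable _) _ _

lemma auxG_nonempty (M : ℕ) {N : ℕ} (t : Fin N → ℝ) (ω : Fin M → Fin N) :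
    (auxG M t ω).Nonempty := by
  obtain ⟨x, hx, hmax⟩ := Finset.exists_max_image (Finset.range (M+1))
    (auxS M t ω) ⟨0, Finset.mem_range.mpr (Nat.succ_pos M)⟩
  exact ⟨x, mem_auxG.mpr ⟨hx, hmax⟩⟩

/-- the first argmax of the prefix sums -/
def auxL (M : ℕ) {N : ℕ} (t : Fin N → ℝ) (ω : Fin M → Fin N) : ℕ :=
  (auxG M t ω).min' (auxG_nonempty M t ω)

lemma auxL_mem (M : ℕ) {N : ℕ} (t : Fin N → ℝ) (ω : Fin M → Fin N) :
    auxL M t ω ∈ auxG M t ω := (auxG M t ω).min'_mem (auxG_nonempty M t ω)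

lemma auxL_le (M : ℕ) {N : ℕ} (t : Fin N → ℝ) (ω : Fin M → Fin N) : auxL M t ω ≤ M := by
  have := mem_auxG.mp (auxL_mem M t ω)
  rw [Finset.mem_range] at this
  omega

lemma auxL_max (M : ℕ) {N : ℕ} (t : Fin N → ℝ) (ω : Fin M → Fin N) :
    ∀ k ≤ M, auxS M t ω k ≤ auxS M t ω (auxL M t ω) := by
  have := mem_auxG.mp (auxL_mem M t ω)
  intro k hk
  exact this.2 k (Finset.mem_range.mpr (by omega))

lemma auxL_first (M : ℕ) {N : ℕ} (t : Fin N → ℝ) (ω : Fin M → Fin N) :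
    ∀ k < auxL M t ω, auxS M t ω k < auxS M t ω (auxL M t ω) := by
  intro k hk
  have hL := auxL_le M t ω
  have hle := auxL_max M t ω k (by omega)
  rcases lt_or_eq_of_le hle with h | h
  · exact h
  · exfalso
    have hkG : k ∈ auxG M t ω := by
      refine mem_auxG.mpr ⟨Finset.mem_range.mpr (by omega), fun m hm => ?_⟩
      rw [h]
      exact auxL_max M t ω m (by rw [Finset.mem_range] at hm; omega)
    have h2 := (auxG M t ω).min'_le k hkG
    have h3 : auxL M t ω ≤ k := h2
    omega

/-- characterization of the filter condition -/
lemma auxCond_iff {M N : ℕ} (t : Fin N → ℝ) (ω : Fin M → Fin N)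
    (ℓ : ℕ) (hℓ : ℓ ≤ M) (hM : 1 ≤ M) :
    ((∀ k < ℓ, 0 < ∑ j ∈ Finset.univ.filter
        (fun j : Fin M => k ≤ j.1 ∧ j.1 < ℓ), t (ω j)) ∧
      (∀ k, ℓ ≤ k → k < M → (∑ j ∈ Finset.univ.filter
        (fun j : Fin M => ℓ ≤ j.1 ∧ j.1 ≤ k), t (ω j)) ≤ 0))
    ↔ ℓ = auxL M t ω := by
  constructor
  · rintro ⟨h1, h2⟩
    set L := auxL M t ω with hLdef
    have hL := auxL_le M t ω
    rcases lt_trichotomy ℓ L with h | h | h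
    · exfalso
      have hk : ℓ ≤ L - 1 := by omega
      have hkM : L - 1 < M := by omega
      have h5 := h2 (L-1) hk hkM
      have e : Finset.univ.filter (fun j : Fin M => ℓ ≤ j.1 ∧ j.1 ≤ L - 1)
          = Finset.univ.filter (fun j : Fin M => ℓ ≤ j.1 ∧ j.1 < L) :=
        Finset.filter_congr (fun j _ => by omega)
      rw [e, auxS_interval t ω (by omega : ℓ ≤ L)] at h5
      have := auxL_first M t ω ℓ h
      rw [← hLdef] at this
      linarith
    · exact h
    · exfalso
      have h5 := h1 L h
      rw [auxS_interval t ω (by omega : L ≤ ℓ)] at h5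
      have := auxL_max M t ω ℓ hℓ
      rw [← hLdef] at this
      linarith
  · rintro rfl
    set L := auxL M t ω with hLdef
    have hL := auxL_le M t ω
    constructor
    · intro k hk
      rw [auxS_interval t ω (by omega : k ≤ L)]
      have := auxL_first M t ω k hk
      rw [← hLdef] at this
      linarith
    · intro k hk hkM
      have e : Finset.univ.filter (fun j : Fin M => L ≤ j.1 ∧ j.1 ≤ k)
          = Finset.univ.filter (fun j : Fin M => L ≤ j.1 ∧ j.1 < k+1) :=
        Finset.filter_congr (fun j _ => by omega)
      rw [e, auxS_interval t ω (by omega : L ≤ k+1)]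
      have := auxL_max M t ω (k+1) (by omega)
      rw [← hLdef] at this
      linarith

end

noncomputable section

def auxPr (M : ℕ) {N : ℕ} (t : Fin N → ℝ) (that : ℝ) (ω : Fin M → Fin N)
    (f : ℝ) (a b : ℕ) : ℝ :=
  ∏ j ∈ Finset.univ.filter (fun j : Fin M => a ≤ j.1 ∧ j.1 < b),
    (1 + f * (t (ω j) / that))

lemma auxPr_mul {M N : ℕ} (t : Fin N → ℝ) (that : ℝ) (ω : Fin M → Fin N)
    (f : ℝ) {a b d : ℕ} (hab : a ≤ b) (hbd : b ≤ d) :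
    auxPr M t that ω f a b * auxPr M t that ω f b d = auxPr M t that ω f a d := by
  have h := Finset.prod_filter_mul_prod_filter_not
    (Finset.univ.filter (fun j : Fin M => a ≤ j.1 ∧ j.1 < d))
    (fun j : Fin M => j.1 < b)
    (fun j => (1 + f * (t (ω j) / that)))
  rw [Finset.filter_filter, Finset.filter_filter] at h
  have e1 : Finset.univ.filter (fun j : Fin M => (a ≤ j.1 ∧ j.1 < d) ∧ j.1 < b)
      = Finset.univ.filter (fun j : Fin M => a ≤ j.1 ∧ j.1 < b) :=
    Finset.filter_congr (fun j _ => by omega)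
  have e2 : Finset.univ.filter (fun j : Fin M => (a ≤ j.1 ∧ j.1 < d) ∧ ¬ j.1 < b)
      = Finset.univ.filter (fun j : Fin M => b ≤ j.1 ∧ j.1 < d) :=
    Finset.filter_congr (fun j _ => by omega)
  rw [e1, e2] at h
  exact h

lemma auxPr_pos {M N : ℕ} (t : Fin N → ℝ) (that : ℝ) (ω : Fin M → Fin N)
    (f : ℝ) (a b : ℕ) (hfac : ∀ j : Fin M, 0 < 1 + f * (t (ω j) / that)) :
    0 < auxPr M t that ω f a b :=
  Finset.prod_pos (fun j _ => hfac j)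

lemma auxPr_self {M N : ℕ} (t : Fin N → ℝ) (that : ℝ) (ω : Fin M → Fin N)
    (f : ℝ) (a : ℕ) : auxPr M t that ω f a a = 1 := by
  rw [auxPr]
  apply Finset.prod_eq_one
  intro j hj
  rw [Finset.mem_filter] at hj
  omega

lemma auxOmega {M N : ℕ} (hM : 1 ≤ M) (hN : 1 ≤ N) (t : Fin N → ℝ) (that : ℝ)
    (hthat_pos : 0 < that) (H : (Finset.univ : Finset (Fin M)).Nonempty)
    (ω : Fin M → Fin N) :
    ∃ ε > 0, ∀ f : ℝ, 0 < f → f < ε →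
      Real.log ((Finset.univ : Finset (Fin M)).inf' H
        (fun ℓ => min 1 (∏ j ∈ Finset.univ.filter (fun j : Fin M => ℓ ≤ j),
          (1 + f * t (ω j) / that))))
      = ∑ j ∈ Finset.univ.filter (fun j : Fin M => auxL M t ω ≤ j.1),
          Real.log (1 + f * t (ω j) / that) := by
  classical
  set L := auxL M t ω with hLdef
  have hL : L ≤ M := auxL_le M t ω
  -- ε₀ : factor positivity
  set T : ℝ := ∑ n, |t n| with hT
  have hT0 : 0 ≤ T := Finset.sum_nonneg fun n _ => abs_nonneg _
  have hTn : ∀ n, |t n| ≤ T := fun n =>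
    Finset.single_le_sum (fun i _ => abs_nonneg (t i)) (Finset.mem_univ n)
  set ε₀ : ℝ := that / (T + 1) with hε₀
  have hε₀pos : 0 < ε₀ := by positivity
  -- per-k lower bounds
  have hch : ∀ k : ℕ, ∃ e : ℝ, 0 < e ∧ ∀ f : ℝ, 0 < f → f < e →
      k < L → 1 ≤ auxPr M t that ω f k L := by
    intro k
    by_cases hk : k < L
    · have hsum : 0 < ∑ j ∈ Finset.univ.filter (fun j : Fin M => k ≤ j.1 ∧ j.1 < L),
          (t (ω j) / that) := by
        rw [← Finset.sum_div]
        apply div_pos _ hthat_pos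
        rw [auxS_interval t ω (le_of_lt hk)]
        have := auxL_first M t ω k hk
        rw [← hLdef] at this
        linarith
      obtain ⟨e, he, hef⟩ := auxProdGeOne _ _ hsum
      exact ⟨e, he, fun f hf0 hfe _ => hef f hf0 hfe⟩
    · exact ⟨1, one_pos, fun f _ _ hk' => absurd hk' hk⟩
  choose εf hεf0 hεf using hch
  set ε : ℝ := min ε₀ ((Finset.range (L+1)).inf'
    ⟨L, Finset.mem_range.mpr (Nat.lt_succ_self L)⟩ εf) with hε
  have hεpos : 0 < ε := by
    apply lt_min hε₀pos
    refine (Finset.lt_inf'_iff _).mpr ?_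
    exact fun b _ => hεf0 b
  refine ⟨ε, hεpos, ?_⟩
  intro f hf0 hfε
  have hfε₀ : f < ε₀ := lt_of_lt_of_le hfε (min_le_left _ _)
  -- factor positivity
  have hfac : ∀ j : Fin M, 0 < 1 + f * (t (ω j) / that) := by
    intro j
    have h2 : f * (T+1) < that := by
      rw [← lt_div_iff₀ (by positivity : (0:ℝ) < T+1)]
      exact hfε₀
    have h1 : f * |t (ω j)| < that := by
      nlinarith [hTn (ω j), abs_nonneg (t (ω j))]
    have h3 : |f * (t (ω j) / that)| < 1 := by
      rw [abs_mul, abs_of_pos hf0, abs_div, abs_of_pos hthat_pos,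
        ← mul_div_assoc, div_lt_one hthat_pos]
      exact h1
    have := abs_lt.mp h3
    linarith [this.1]
  -- lower bounds: k ≤ L
  have hge : ∀ k ≤ L, 1 ≤ auxPr M t that ω f k L := by
    intro k hk
    rcases lt_or_eq_of_le hk with h | h
    · apply hεf k f hf0 _ h
      calc f < ε := hfε
        _ ≤ _ := min_le_right _ _
        _ ≤ εf k := Finset.inf'_le _ (Finset.mem_range.mpr (by omega))
    · rw [h, auxPr_self]
  -- upper bounds: L ≤ d ≤ M
  have hle : ∀ d, L ≤ d → d ≤ M → auxPr M t that ω f L d ≤ 1 := by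
    intro d hLd hdM
    apply auxProdLeOne _ _ f hf0.le
    · rw [← Finset.sum_div]
      apply div_nonpos_of_nonpos_of_nonneg _ hthat_pos.le
      rw [auxS_interval t ω hLd]
      have := auxL_max M t ω d hdM
      rw [← hLdef] at this
      linarith
    · exact fun j _ => (hfac j).le
  -- rewrite the inf' function
  have hfun : (fun ℓ : Fin M => min 1 (∏ j ∈ Finset.univ.filter
        (fun j : Fin M => ℓ ≤ j), (1 + f * t (ω j) / that)))
      = fun ℓ : Fin M => min 1 (auxPr M t that ω f ℓ.1 M) := by
    funext ℓ
    congr 1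
    rw [auxPr]
    apply Finset.prod_congr
    · exact Finset.filter_congr (fun j _ => by
        simp only [Fin.le_def]
        exact ⟨fun h => ⟨h, j.2⟩, fun h => h.1⟩)
    · intro j _
      rw [mul_div_assoc]
  rw [hfun]
  have hPrpos : ∀ a b : ℕ, 0 < auxPr M t that ω f a b :=
    fun a b => auxPr_pos t that ω f a b hfac
  rcases lt_or_eq_of_le hL with hLM | hLM
  · -- case L < M
    set V : ℝ := auxPr M t that ω f L M with hV
    have hV1 : V ≤ 1 := hle M hL le_rfl
    have hVpos : 0 < V := hPrpos L M
    have hinf : (Finset.univ : Finset (Fin M)).inf' H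
        (fun ℓ : Fin M => min 1 (auxPr M t that ω f ℓ.1 M)) = V := by
      apply le_antisymm
      · have h1 := Finset.inf'_le (f := fun ℓ : Fin M =>
          min 1 (auxPr M t that ω f ℓ.1 M)) (Finset.mem_univ (⟨L, hLM⟩ : Fin M))
        simp only at h1
        calc _ ≤ min 1 (auxPr M t that ω f L M) := h1
          _ = V := min_eq_right hV1
      · apply Finset.le_inf'
        intro ℓ _
        apply le_min hV1
        rcases le_or_gt ℓ.1 L with h | h
        · calc V = 1 * V := (one_mul V).symm
            _ ≤ auxPr M t that ω f ℓ.1 L * V :=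
              mul_le_mul_of_nonneg_right (hge ℓ.1 h) hVpos.le
            _ = auxPr M t that ω f ℓ.1 M := auxPr_mul t that ω f h hL
        · calc V = auxPr M t that ω f L ℓ.1 * auxPr M t that ω f ℓ.1 M :=
              (auxPr_mul t that ω f h.le (le_of_lt ℓ.2)).symm
            _ ≤ auxPr M t that ω f ℓ.1 M :=
              mul_le_of_le_one_left (hPrpos _ _).le (hle ℓ.1 h.le (le_of_lt ℓ.2))
    rw [hinf, hV, auxPr, Real.log_prod (fun j _ => (hfac j).ne')]
    have efil : Finset.univ.filter (fun j : Fin M => L ≤ j.1 ∧ j.1 < M)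
        = Finset.univ.filter (fun j : Fin M => L ≤ j.1) :=
      Finset.filter_congr (fun j _ => by
        have := j.2
        omega)
    rw [efil]
    exact Finset.sum_congr rfl (fun j _ => by rw [mul_div_assoc])
  · -- case L = M
    have hconst : ∀ ℓ : Fin M, min 1 (auxPr M t that ω f ℓ.1 M) = 1 := by
      intro ℓ
      apply min_eq_left
      have := hge ℓ.1 (by omega : ℓ.1 ≤ L)
      have e : auxPr M t that ω f ℓ.1 L = auxPr M t that ω f ℓ.1 M := by rw [hLM]
      linarith [e ▸ this]
    have : (Finset.univ : Finset (Fin M)).inf' H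
        (fun ℓ : Fin M => min 1 (auxPr M t that ω f ℓ.1 M)) = 1 := by
      rw [show (fun ℓ : Fin M => min 1 (auxPr M t that ω f ℓ.1 M)) = fun _ => 1
        from funext hconst]
      exact Finset.inf'_const _ _
    rw [this, Real.log_one]
    have : Finset.univ.filter (fun j : Fin M => L ≤ j.1) = ∅ := by
      apply Finset.filter_false_of_mem
      intro j _
      have := j.2
      omega
    rw [this, Finset.sum_empty]


lemma auxGroup {M N : ℕ} (g : Fin N → ℝ) (ω : Fin M → Fin N) (ℓ : ℕ) :
    ∑ n : Fin N, ((Finset.univ.filter (fun i : Fin M => ℓ ≤ i.1 ∧ ω i = n)).card : ℝ) * g n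
      = ∑ i ∈ Finset.univ.filter (fun i : Fin M => ℓ ≤ i.1), g (ω i) := by
  classical
  have h := Finset.sum_fiberwise
    (Finset.univ.filter (fun i : Fin M => ℓ ≤ i.1)) ω (fun i => g (ω i))
  rw [← h]
  apply Finset.sum_congr rfl
  intro n _
  rw [Finset.filter_filter]
  have e : ∀ i ∈ Finset.univ.filter (fun i : Fin M => ℓ ≤ i.1 ∧ ω i = n),
      g (ω i) = g n := by
    intro i hi
    rw [Finset.mem_filter] at hi
    rw [hi.2.2]
  rw [Finset.sum_congr rfl e, Finset.sum_const, nsmul_eq_mul]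


/-- For sufficiently small `f > 0`,
`E(Dcur^(M)(f,·)) = ∑ₙ (∑_{ℓ=0}^M Λₙ^{(ℓ,M,N)})·log(1 + f·tₙ/t̂)`, where `Λₙ^{(M,M,N)} = 0`
and for `ℓ ∈ {0,…,M-1}`, `Λₙ^{(ℓ,M,N)}` sums `P({ω})·#{i ≥ ℓ+1 : ωᵢ = n}` over the `ω`
whose run-up tops exactly after `ℓ` trades (indices here are 0-based: the 1-based
conditions `∑_{j=k}^ℓ t_{ω_j} > 0` for `k = 1,…,ℓ` and `∑_{j=ℓ+1}^{k̃} t_{ω_j} ≤ 0`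
for `k̃ = ℓ+1,…,M` become conditions on 0-based positions `j.1 ∈ {0,…,M-1}`). -/
theorem stmt_12 (N : ℕ) (hN : 1 ≤ N) (t : Fin N → ℝ) (ht : ∀ i, t i ≠ 0)
    (hneg : ∃ i, t i < 0) (that : ℝ)
    (hthat : IsGreatest {x : ℝ | ∃ i, t i < 0 ∧ x = |t i|} that)
    (hthat_pos : 0 < that)
    (p : Fin N → ℝ) (hp : ∀ i, 0 < p i) (hpsum : ∑ i, p i = 1)
    (M : ℕ) (hM : 1 ≤ M)
    (Λ : Fin N → ℕ → ℝ)
    (hΛ : ∀ n : Fin N, ∀ ℓ < M, Λ n ℓ =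
      ∑ ω ∈ Finset.univ.filter (fun ω : Fin M → Fin N =>
          (∀ k < ℓ, 0 < ∑ j ∈ Finset.univ.filter
              (fun j : Fin M => k ≤ j.1 ∧ j.1 < ℓ), t (ω j)) ∧
          (∀ k, ℓ ≤ k → k < M → (∑ j ∈ Finset.univ.filter
              (fun j : Fin M => ℓ ≤ j.1 ∧ j.1 ≤ k), t (ω j)) ≤ 0)),
        (∏ j, p (ω j)) *
          ((Finset.univ.filter (fun i : Fin M => ℓ ≤ i.1 ∧ ω i = n)).card : ℝ))
    (hΛM : ∀ n : Fin N, Λ n M = 0) :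
    ∃ ε > 0, ∀ f : ℝ, 0 < f → f < ε →
      ∑ ω : Fin M → Fin N, (∏ j, p (ω j)) *
        Real.log ((Finset.univ : Finset (Fin M)).inf'
          (Finset.univ_nonempty_iff.mpr (Fin.pos_iff_nonempty.mp hM))
          (fun ℓ => min 1 (∏ j ∈ Finset.univ.filter (fun j : Fin M => ℓ ≤ j),
            (1 + f * t (ω j) / that))))
      = ∑ n, (∑ ℓ ∈ Finset.range (M + 1), Λ n ℓ) * Real.log (1 + f * t n / that) := by
  classical
  have hNE : (Finset.univ : Finset (Fin M → Fin N)).Nonempty := by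
    have : Nonempty (Fin N) := Fin.pos_iff_nonempty.mp hN
    exact Finset.univ_nonempty
  have hom := fun ω : Fin M → Fin N => auxOmega hM hN t that hthat_pos
    (Finset.univ_nonempty_iff.mpr (Fin.pos_iff_nonempty.mp hM)) ω
  choose εf hεf0 hεf using hom
  refine ⟨Finset.univ.inf' hNE εf,
    (Finset.lt_inf'_iff hNE).mpr (fun ω _ => hεf0 ω), ?_⟩
  intro f hf0 hfε
  have hfω : ∀ ω : Fin M → Fin N, f < εf ω :=
    fun ω => lt_of_lt_of_le hfε (Finset.inf'_le _ (Finset.mem_univ ω))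
  set T : ℕ → (Fin M → Fin N) → ℝ := fun ℓ ω =>
    ∑ j ∈ Finset.univ.filter (fun j : Fin M => ℓ ≤ j.1),
      Real.log (1 + f * t (ω j) / that) with hT
  set Cond : ℕ → (Fin M → Fin N) → Prop := fun ℓ ω =>
    (∀ k < ℓ, 0 < ∑ j ∈ Finset.univ.filter
        (fun j : Fin M => k ≤ j.1 ∧ j.1 < ℓ), t (ω j)) ∧
    (∀ k, ℓ ≤ k → k < M → (∑ j ∈ Finset.univ.filter
        (fun j : Fin M => ℓ ≤ j.1 ∧ j.1 ≤ k), t (ω j)) ≤ 0) with hCond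
  -- left side
  have hLHS : (∑ ω : Fin M → Fin N, (∏ j, p (ω j)) *
        Real.log ((Finset.univ : Finset (Fin M)).inf'
          (Finset.univ_nonempty_iff.mpr (Fin.pos_iff_nonempty.mp hM))
          (fun ℓ => min 1 (∏ j ∈ Finset.univ.filter (fun j : Fin M => ℓ ≤ j),
            (1 + f * t (ω j) / that)))))
      = ∑ ω : Fin M → Fin N, (∏ j, p (ω j)) * T (auxL M t ω) ω := by
    apply Finset.sum_congr rfl
    intro ω _
    rw [hεf ω f hf0 (hfω ω)]
  rw [hLHS]
  -- Λ in summed form, for all ℓ in range (M+1)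
  have hΛall : ∀ n : Fin N, ∀ ℓ ∈ Finset.range (M+1), Λ n ℓ =
      ∑ ω ∈ Finset.univ.filter (Cond ℓ),
        (∏ j, p (ω j)) *
          ((Finset.univ.filter (fun i : Fin M => ℓ ≤ i.1 ∧ ω i = n)).card : ℝ) := by
    intro n ℓ hℓ
    rw [Finset.mem_range] at hℓ
    rcases lt_or_eq_of_le (Nat.lt_succ_iff.mp hℓ) with h | h
    · exact hΛ n ℓ h
    · rw [h, hΛM n]
      symm
      apply Finset.sum_eq_zero
      intro ω _
      have : Finset.univ.filter (fun i : Fin M => M ≤ i.1 ∧ ω i = n) = ∅ := by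
        apply Finset.filter_false_of_mem
        intro i _
        have := i.2
        omega
      rw [this, Finset.card_empty]
      norm_num
  -- right side
  have hRHS : (∑ n, (∑ ℓ ∈ Finset.range (M + 1), Λ n ℓ) * Real.log (1 + f * t n / that))
      = ∑ ω : Fin M → Fin N, (∏ j, p (ω j)) * T (auxL M t ω) ω := by
    calc ∑ n, (∑ ℓ ∈ Finset.range (M + 1), Λ n ℓ) * Real.log (1 + f * t n / that)
        = ∑ n, ∑ ℓ ∈ Finset.range (M + 1), Λ n ℓ * Real.log (1 + f * t n / that) := by
          apply Finset.sum_congr rfl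
          intro n _
          rw [Finset.sum_mul]
      _ = ∑ ℓ ∈ Finset.range (M + 1), ∑ n, Λ n ℓ * Real.log (1 + f * t n / that) :=
          Finset.sum_comm
      _ = ∑ ℓ ∈ Finset.range (M + 1), ∑ ω ∈ Finset.univ.filter (Cond ℓ),
            (∏ j, p (ω j)) * T ℓ ω := by
          apply Finset.sum_congr rfl
          intro ℓ hℓ
          calc ∑ n, Λ n ℓ * Real.log (1 + f * t n / that)
              = ∑ n, ∑ ω ∈ Finset.univ.filter (Cond ℓ),
                  (∏ j, p (ω j)) *
                  ((Finset.univ.filter (fun i : Fin M => ℓ ≤ i.1 ∧ ω i = n)).card : ℝ) *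
                  Real.log (1 + f * t n / that) := by
                apply Finset.sum_congr rfl
                intro n _
                rw [hΛall n ℓ hℓ, Finset.sum_mul]
            _ = ∑ ω ∈ Finset.univ.filter (Cond ℓ), ∑ n,
                  (∏ j, p (ω j)) *
                  ((Finset.univ.filter (fun i : Fin M => ℓ ≤ i.1 ∧ ω i = n)).card : ℝ) *
                  Real.log (1 + f * t n / that) := Finset.sum_comm
            _ = ∑ ω ∈ Finset.univ.filter (Cond ℓ), (∏ j, p (ω j)) * T ℓ ω := by
                apply Finset.sum_congr rfl
                intro ω _
                simp only [hT]
                rw [← auxGroup (fun n => Real.log (1 + f * t n / that)) ω ℓ,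
                  Finset.mul_sum]
                apply Finset.sum_congr rfl
                intro n _
                ring
      _ = ∑ ℓ ∈ Finset.range (M + 1), ∑ ω : Fin M → Fin N,
            if Cond ℓ ω then (∏ j, p (ω j)) * T ℓ ω else 0 := by
          apply Finset.sum_congr rfl
          intro ℓ _
          rw [Finset.sum_filter]
      _ = ∑ ω : Fin M → Fin N, ∑ ℓ ∈ Finset.range (M + 1),
            if Cond ℓ ω then (∏ j, p (ω j)) * T ℓ ω else 0 := Finset.sum_comm
      _ = ∑ ω : Fin M → Fin N, (∏ j, p (ω j)) * T (auxL M t ω) ω := by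
          apply Finset.sum_congr rfl
          intro ω _
          have hLmem : auxL M t ω ∈ Finset.range (M + 1) :=
            Finset.mem_range.mpr (Nat.lt_succ_iff.mpr (auxL_le M t ω))
          rw [Finset.sum_eq_single_of_mem (auxL M t ω) hLmem]
          · rw [if_pos]
            exact (auxCond_iff t ω (auxL M t ω) (auxL_le M t ω) hM).mpr rfl
          · intro ℓ hℓ hne
            rw [if_neg]
            intro hc
            exact hne ((auxCond_iff t ω ℓ
              (Nat.lt_succ_iff.mp (Finset.mem_range.mp hℓ)) hM).mp hc)
  rw [hRHS]
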